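/- Let G be a compact graph with exactly one vertex u of degree greater than 2. Then G is a union of finitely many odd cycles pairwise intersecting exactly in the common vertex u; that is, every edge of G lies on a cycle through u, all cycles of G pass through u and are odd, and any two distinct cycles meet only in u. -/

import Mathlib

/-- `G` has no even cycles. -/
def SimpleGraph.NoEvenCycles {V : Type*} (G : SimpleGraph V) : Prop :=
  ∀ ⦃v : V⦄ (c : G.Walk v v), c.IsCycle → ¬ Even c.length

/-- The odd-cycle condition: every two cycles either share a vertex or are joined by an
edge of `G`. -/
def SimpleGraph.OddCycleCondition {V : Type*} (G : SimpleGraph V) : Prop :=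
  ∀ ⦃u v : V⦄ (c₁ : G.Walk u u) (c₂ : G.Walk v v), c₁.IsCycle → c₂.IsCycle →
    (∃ x, x ∈ c₁.support ∧ x ∈ c₂.support) ∨
    (∃ x y, x ∈ c₁.support ∧ y ∈ c₂.support ∧ G.Adj x y)

/-- A compact graph: a finite connected simple graph in which every vertex has degree
greater than one, with no even cycles, satisfying the odd-cycle condition. -/
def SimpleGraph.IsCompact {V : Type*} [Fintype V] (G : SimpleGraph V)
    [DecidableRel G.Adj] : Prop :=
  G.Connected ∧ (∀ v : V, 2 ≤ G.degree v) ∧ G.NoEvenCycles ∧ G.OddCycleCondition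

open SimpleGraph

section Aux

variable {V : Type*} {G : SimpleGraph V}

/-- Every vertex on a cycle has (at least) two distinct incident edges of the cycle. -/
lemma aux_two_edges {v x : V} (c : G.Walk v v) (hc : c.IsCycle) (hx : x ∈ c.support) :
    ∃ a b : V, a ≠ b ∧ s(x, a) ∈ c.edges ∧ s(x, b) ∈ c.edges := by
  classical
  have hrot : ∀ {e : Sym2 V}, e ∈ (c.rotate x hx).edges ↔ e ∈ c.edges :=
    fun {e} => (c.rotate_edges x hx).mem_iff
  set d := c.rotate x hx with hdd
  have hd : d.IsCycle := hc.rotate hx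
  obtain ⟨y, hadj, q, hq⟩ := SimpleGraph.Walk.not_nil_iff.mp hd.not_nil
  have hqlen : 0 < q.length := by
    have := hd.three_le_length
    rw [hq] at this
    simp [SimpleGraph.Walk.length_cons] at this
    omega
  have hqnil : ¬ q.reverse.Nil := by
    rw [SimpleGraph.Walk.nil_iff_length_eq, SimpleGraph.Walk.length_reverse]
    omega
  obtain ⟨b, hadj2, q2, hq2⟩ := SimpleGraph.Walk.not_nil_iff.mp hqnil
  have hbq : s(x, b) ∈ q.edges := by
    have : s(x, b) ∈ q.reverse.edges := by rw [hq2]; simp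
    rwa [SimpleGraph.Walk.edges_reverse, List.mem_reverse] at this
  have hyd : s(x, y) ∈ d.edges := by rw [hq]; simp
  have hbd : s(x, b) ∈ d.edges := by rw [hq]; simp [hbq]
  have hne : y ≠ b := by
    intro h
    have hnd : d.edges.Nodup := hd.edges_nodup
    rw [hq, SimpleGraph.Walk.edges_cons] at hnd
    exact (List.nodup_cons.mp hnd).1 (h ▸ hbq)
  exact ⟨y, b, hne, hrot.mp hyd, hrot.mp hbd⟩

/-- Propagation along a walk through a set closed under adjacency away from `u`. -/
lemma aux_walk_closed {u : V} {S : Set V}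
    (hcl : ∀ v ∈ S, v ≠ u → ∀ w, G.Adj v w → w ∈ S) :
    ∀ {a b : V} (q : G.Walk a b), a ∈ S → (∀ v ∈ q.support.dropLast, v ≠ u) →
      ∀ v ∈ q.support, v ∈ S := by
  intro a b q
  induction q with
  | nil =>
    intro ha _ v hv
    simp at hv; subst hv; exact ha
  | @cons a c b h q ih =>
    intro ha hdl v hv
    have hsup : (SimpleGraph.Walk.cons h q).support = a :: q.support := by simp
    have hql : q.support ≠ [] := q.support_ne_nil
    have hdl' : (SimpleGraph.Walk.cons h q).support.dropLast = a :: q.support.dropLast := by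
      rw [hsup, List.dropLast_cons_of_ne_nil hql]
    have hau : a ≠ u := by
      apply hdl
      rw [hdl']; exact List.mem_cons_self
    have hc : c ∈ S := hcl a ha hau c h
    rw [hsup] at hv
    rcases List.mem_cons.mp hv with rfl | hv
    · exact ha
    · exact ih hc (fun w hw => hdl w (by rw [hdl']; exact List.mem_cons_of_mem _ hw)) v hv

/-- If the endpoint `u` of a walk occurs at most once in the support,
then it does not occur among the earlier vertices. -/
lemma aux_dropLast [DecidableEq V] {u a : V} (q : G.Walk a u)
    (hc : q.support.count u ≤ 1) :
    ∀ v ∈ q.support.dropLast, v ≠ u := by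
  have h1 : q.support.reverse = u :: q.reverse.support.tail := by
    rw [← SimpleGraph.Walk.support_reverse]; exact q.reverse.support_eq_cons
  have h2 : q.support = q.reverse.support.tail.reverse ++ [u] := by
    rw [← List.reverse_reverse q.support, h1]; simp
  have h3 : q.support.dropLast = q.reverse.support.tail.reverse := by
    conv_lhs => rw [h2]
    exact List.dropLast_concat
  rw [h2] at hc
  rw [List.count_append] at hc
  have huu : List.count u [u] = 1 := by simp
  rw [huu] at hc
  have : List.count u q.reverse.support.tail.reverse = 0 := by omega
  intro v hv hvu
  subst hvu
  rw [h3] at hv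
  exact (List.count_eq_zero.mp this) hv

/-- A vertex of degree two with two distinct known neighbours has no other neighbours. -/
lemma aux_nbhd [Fintype V] [DecidableRel G.Adj] [DecidableEq V] {x : V}
    (hdeg : G.degree x = 2) {p q : V} (hne : p ≠ q) (hp : G.Adj x p) (hq : G.Adj x q) :
    ∀ w, G.Adj x w → w = p ∨ w = q := by
  have hsub : ({p, q} : Finset V) ⊆ G.neighborFinset x := by
    intro w hw
    rw [SimpleGraph.mem_neighborFinset]
    rcases Finset.mem_insert.mp hw with rfl | hw
    · exact hp
    · rw [Finset.mem_singleton] at hw; subst hw; exact hq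
  have hcard : ({p, q} : Finset V).card = 2 := Finset.card_pair hne
  have heq : G.neighborFinset x = {p, q} := by
    apply (Finset.eq_of_subset_of_card_le hsub ?_).symm
    rw [hcard]
    exact le_of_eq hdeg
  intro w hw
  have : w ∈ G.neighborFinset x := (SimpleGraph.mem_neighborFinset _ _ _).mpr hw
  rw [heq] at this
  rcases Finset.mem_insert.mp this with rfl | h
  · exact Or.inl rfl
  · exact Or.inr (Finset.mem_singleton.mp h)

/-- The support of a cycle is closed under adjacency at its degree-two vertices. -/
lemma aux_cycle_closed [Fintype V] [DecidableRel G.Adj] [DecidableEq V] {u : V}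
    (hdeg2 : ∀ v : V, v ≠ u → G.degree v = 2)
    {w : V} (c : G.Walk w w) (hc : c.IsCycle) :
    ∀ a ∈ {z | z ∈ c.support}, a ≠ u → ∀ b, G.Adj a b → b ∈ {z | z ∈ c.support} := by
  intro a ha hau b hab
  obtain ⟨p, q, hpq, hp, hq⟩ := aux_two_edges c hc ha
  have hadjp : G.Adj a p := c.adj_of_mem_edges hp
  have hadjq : G.Adj a q := c.adj_of_mem_edges hq
  rcases aux_nbhd (hdeg2 a hau) hpq hadjp hadjq b hab with rfl | rfl
  · exact c.snd_mem_support_of_mem_edges hp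
  · exact c.snd_mem_support_of_mem_edges hq

/-- In a connected graph all of whose vertices other than `u` have degree two,
every cycle passes through `u`. -/
lemma aux_mem_u [Fintype V] [DecidableRel G.Adj] [DecidableEq V] {u : V}
    (hconn : G.Connected) (hdeg2 : ∀ v : V, v ≠ u → G.degree v = 2)
    {v : V} (c : G.Walk v v) (hc : c.IsCycle) : u ∈ c.support := by
  by_contra hus
  have hcl := aux_cycle_closed hdeg2 c hc
  obtain ⟨p⟩ := hconn.preconnected v u
  let P := p.toPath
  have hnd : (P : G.Walk v u).support.Nodup := P.2.support_nodup
  have hcount : (P : G.Walk v u).support.count u ≤ 1 :=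
    List.nodup_iff_count_le_one.mp hnd u
  exact hus (aux_walk_closed hcl (P : G.Walk v u) (c.start_mem_support)
    (aux_dropLast _ hcount) u (SimpleGraph.Walk.end_mem_support _))

/-- For a nontrivial closed walk, membership in the support is equivalent to
membership in the tail of the support. -/
lemma aux_mem_tail {v z : V} (c : G.Walk v v) (hnil : ¬ c.Nil) (hz : z ∈ c.support) :
    z ∈ c.support.tail := by
  obtain ⟨y, hadj, q, hq⟩ := SimpleGraph.Walk.not_nil_iff.mp hnil
  rcases eq_or_ne z v with rfl | hzv
  · rw [hq, SimpleGraph.Walk.support_cons]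
    exact q.end_mem_support
  · rw [c.support_eq_cons] at hz
    exact (List.mem_cons.mp hz).resolve_left hzv

/-- Parity argument: deleting an edge cannot disconnect its endpoints when
all vertices on one side have degree two. -/
lemma aux_parity [Fintype V] [DecidableRel G.Adj] [DecidableEq V] {u x y : V}
    (hxy : G.Adj x y) (hdeg2 : ∀ v : V, v ≠ u → G.degree v = 2)
    (hnr : ¬ (G \ fromEdgeSet {s(x, y)}).Reachable x y)
    (hu : ¬ (G \ fromEdgeSet {s(x, y)}).Reachable x u) : False := by
  classical
  set G' : SimpleGraph V := G \ fromEdgeSet {s(x, y)} with hG'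
  have hG'adj : ∀ a b : V, G'.Adj a b ↔ G.Adj a b ∧ s(a, b) ≠ s(x, y) := by
    intro a b
    rw [hG', sdiff_adj, fromEdgeSet_adj]
    constructor
    · rintro ⟨h1, h2⟩
      refine ⟨h1, fun he => h2 ⟨by simp [he], h1.ne⟩⟩
    · rintro ⟨h1, h2⟩
      exact ⟨h1, fun ⟨he, _⟩ => h2 (by simpa using he)⟩
  set s : Finset V := Finset.univ.filter (fun v => G'.Reachable x v) with hs
  have hxs : x ∈ s := by
    simp only [hs, Finset.mem_filter, Finset.mem_univ, true_and]
    exact Reachable.refl x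
  have hys : y ∉ s := by simp [hs]; exact hnr
  have hus : u ∉ s := by simp [hs]; exact hu
  have hclose : ∀ a ∈ s, ∀ b, G'.Adj a b → b ∈ s := by
    intro a ha b hab
    simp only [hs, Finset.mem_filter, Finset.mem_univ, true_and] at ha ⊢
    exact ha.trans hab.reachable
  set H : SimpleGraph V :=
    { Adj := fun a b => G.Adj a b ∧ a ∈ s ∧ b ∈ s ∧ s(a, b) ≠ s(x, y)
      symm := by
        constructor
        rintro a b ⟨h1, h2, h3, h4⟩
        exact ⟨h1.symm, h3, h2, by rwa [Sym2.eq_swap]⟩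
      loopless := ⟨fun a h => G.loopless.irrefl a h.1⟩ } with hH
  haveI : DecidableRel H.Adj := Classical.decRel _
  have hHnb : ∀ a ∈ s, a ≠ x → H.neighborFinset a = G.neighborFinset a := by
    intro a ha hax
    ext w
    simp only [mem_neighborFinset, hH]
    constructor
    · exact fun h => h.1
    · intro h
      have hne : s(a, w) ≠ s(x, y) := by
        intro he
        rw [Sym2.eq_iff] at he
        rcases he with ⟨rfl, rfl⟩ | ⟨rfl, rfl⟩
        · exact hax rfl
        · exact hys ha
      exact ⟨h, ha, hclose a ha w ((hG'adj a w).mpr ⟨h, hne⟩), hne⟩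
  have hHnbx : H.neighborFinset x = (G.neighborFinset x).erase y := by
    ext w
    simp only [mem_neighborFinset, hH, Finset.mem_erase]
    constructor
    · rintro ⟨h1, _, _, h4⟩
      refine ⟨fun hw => h4 (by rw [hw]), h1⟩
    · rintro ⟨hwy, h⟩
      have hne : s(x, w) ≠ s(x, y) := by
        intro he
        rw [Sym2.eq_iff] at he
        rcases he with ⟨-, rfl⟩ | ⟨rfl, -⟩
        · exact hwy rfl
        · exact hxy.ne rfl
      exact ⟨h, hxs, hclose x hxs w ((hG'adj x w).mpr ⟨h, hne⟩), hne⟩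
  have hHout : ∀ a, a ∉ s → H.degree a = 0 := by
    intro a ha
    rw [degree, Finset.card_eq_zero]
    ext w
    simp only [mem_neighborFinset, hH, Finset.notMem_empty, iff_false]
    rintro ⟨_, h2, _, _⟩
    exact ha h2
  have hsum := H.sum_degrees_eq_twice_card_edges
  have hsum2 : ∑ v, H.degree v = ∑ v ∈ s, H.degree v := by
    rw [← Finset.sum_subset (Finset.subset_univ s)]
    intro a _ ha
    exact hHout a ha
  have hdegx : H.degree x = 1 := by
    rw [degree, hHnbx, Finset.card_erase_of_mem (by rwa [mem_neighborFinset])]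
    have : G.degree x = 2 := hdeg2 x (fun h => hus (h ▸ hxs))
    rw [degree] at this
    omega
  have hdega : ∀ a ∈ s, a ≠ x → H.degree a = 2 := by
    intro a ha hax
    rw [degree, hHnb a ha hax, ← degree]
    exact hdeg2 a (fun h => hus (h ▸ ha))
  have hsplit : ∑ v ∈ s, H.degree v = H.degree x + ∑ v ∈ s.erase x, H.degree v :=
    (Finset.add_sum_erase s _ hxs).symm
  have herase : ∑ v ∈ s.erase x, H.degree v = 2 * (s.card - 1) := by
    rw [Finset.sum_congr rfl (fun a ha => hdega a (Finset.mem_of_mem_erase ha)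
      (Finset.ne_of_mem_erase ha))]
    rw [Finset.sum_const, Finset.card_erase_of_mem hxs, smul_eq_mul, Nat.mul_comm]
  have hcard : 1 ≤ s.card := Finset.card_pos.mpr ⟨x, hxs⟩
  omega

/-- If two cycles share a vertex other than `u`, the support of the first is contained
in the support of the second. -/
lemma aux_supp_subset [Fintype V] [DecidableRel G.Adj] [DecidableEq V] {u : V}
    (hconn : G.Connected) (hdeg2 : ∀ v : V, v ≠ u → G.degree v = 2)
    {v w x : V} (c₁ : G.Walk v v) (c₂ : G.Walk w w) (hc1 : c₁.IsCycle) (hc2 : c₂.IsCycle)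
    (hx1 : x ∈ c₁.support) (hx2 : x ∈ c₂.support) (hxu : x ≠ u) :
    ∀ z ∈ c₁.support, z ∈ c₂.support := by
  have hcl := aux_cycle_closed hdeg2 c₂ hc2
  have hu1 : u ∈ c₁.support := aux_mem_u hconn hdeg2 c₁ hc1
  set d := c₁.rotate x hx1 with hdd
  have hdc : d.IsCycle := hc1.rotate hx1
  have htail : ∀ z ∈ c₁.support, z ∈ d.support := by
    intro z hz
    rcases eq_or_ne z x with rfl | hzx
    · exact d.start_mem_support
    · have hzt : z ∈ c₁.support.tail := aux_mem_tail c₁ hc1.not_nil hz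
      have : z ∈ d.support.tail := (c₁.support_rotate x hx1).mem_iff.mpr hzt
      rw [d.support_eq_cons]
      exact List.mem_cons_of_mem _ this
  have hud : u ∈ d.support := htail u hu1
  have hcd : d.support.count u = 1 := by
    have h1 : d.support = x :: d.support.tail := d.support_eq_cons
    have h2 : u ∈ d.support.tail := by
      rw [h1] at hud
      exact (List.mem_cons.mp hud).resolve_left (fun h => hxu h.symm)
    have h3 : d.support.tail.count u ≤ 1 := List.nodup_iff_count_le_one.mp hdc.2 u
    have h4 : 1 ≤ d.support.tail.count u := List.count_pos_iff.mpr h2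
    rw [h1, List.count_cons_of_ne hxu]
    omega
  set p1 := d.takeUntil u hud with hp1
  set p2 := d.dropUntil u hud with hp2
  have hcount1 : p1.support.count u = 1 := d.count_support_takeUntil_eq_one hud
  have hspec : p1.append p2 = d := d.take_spec hud
  have hdsupp : d.support = p1.support ++ p2.support.tail := by
    rw [← hspec, SimpleGraph.Walk.support_append]
  have hcount2 : p2.support.tail.count u = 0 := by
    have := hcd
    rw [hdsupp, List.count_append, hcount1] at this
    omega
  have hcountr : p2.reverse.support.count u = 1 := by
    rw [SimpleGraph.Walk.support_reverse, List.count_reverse, p2.support_eq_cons,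
      List.count_cons_self, hcount2]
  have hsub1 : ∀ z ∈ p1.support, z ∈ {z | z ∈ c₂.support} :=
    aux_walk_closed hcl p1 hx2 (aux_dropLast _ (le_of_eq hcount1))
  have hsub2 : ∀ z ∈ p2.reverse.support, z ∈ {z | z ∈ c₂.support} :=
    aux_walk_closed hcl p2.reverse hx2 (aux_dropLast _ (le_of_eq hcountr))
  intro z hz
  have hzd : z ∈ d.support := htail z hz
  rw [hdsupp] at hzd
  rcases List.mem_append.mp hzd with h | h
  · exact hsub1 z h
  · have : z ∈ p2.support := by
      rw [p2.support_eq_cons]; exact List.mem_cons_of_mem _ h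
    have : z ∈ p2.reverse.support := by
      rw [SimpleGraph.Walk.support_reverse, List.mem_reverse]; exact this
    exact hsub2 z this

/-- If two cycles share a vertex other than `u`, every edge of the first cycle
is an edge of the second. -/
lemma aux_edge_sub [Fintype V] [DecidableRel G.Adj] [DecidableEq V] {u : V}
    (hconn : G.Connected) (hdeg2 : ∀ v : V, v ≠ u → G.degree v = 2)
    {v w x : V} (c₁ : G.Walk v v) (c₂ : G.Walk w w) (hc1 : c₁.IsCycle) (hc2 : c₂.IsCycle)
    (hx1 : x ∈ c₁.support) (hx2 : x ∈ c₂.support) (hxu : x ≠ u) :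
    ∀ e ∈ c₁.edges, e ∈ c₂.edges := by
  have hsupp := aux_supp_subset hconn hdeg2 c₁ c₂ hc1 hc2 hx1 hx2 hxu
  have inner : ∀ a b : V, s(a, b) ∈ c₁.edges → a ≠ u → s(a, b) ∈ c₂.edges := by
    intro a b hab hau
    have hadj : G.Adj a b := c₁.adj_of_mem_edges hab
    have ha2 : a ∈ c₂.support := hsupp a (c₁.fst_mem_support_of_mem_edges hab)
    obtain ⟨p, q, hpq, hp, hq⟩ := aux_two_edges c₂ hc2 ha2
    rcases aux_nbhd (hdeg2 a hau) hpq (c₂.adj_of_mem_edges hp)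
      (c₂.adj_of_mem_edges hq) b hadj with rfl | rfl
    · exact hp
    · exact hq
  intro e
  induction e using Sym2.ind with
  | _ a b =>
    intro he
    rcases eq_or_ne a u with rfl | hau
    · have hbu : b ≠ a := (c₁.adj_of_mem_edges he).ne'
      rw [Sym2.eq_swap] at he ⊢
      exact inner b a he hbu
    · exact inner a b he hau

end Aux

/-- A compact graph with exactly one big vertex `u` is a union of finitely many odd
cycles pairwise meeting exactly in `u`: every edge lies on a cycle through `u`, every
cycle of `G` passes through `u` and is odd, and two distinct cycles meet only in `u`. -/
theorem stmt8 {V : Type*} [Fintype V] (G : SimpleGraph V) [DecidableRel G.Adj]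
    (hG : G.IsCompact) {u : V} (hu : 2 < G.degree u)
    (huniq : ∀ v : V, 2 < G.degree v → v = u) :
    (∀ e ∈ G.edgeSet, ∃ c : G.Walk u u, c.IsCycle ∧ e ∈ c.edges) ∧
    (∀ ⦃v : V⦄ (c : G.Walk v v), c.IsCycle → u ∈ c.support ∧ Odd c.length) ∧
    (∀ ⦃v w : V⦄ (c₁ : G.Walk v v) (c₂ : G.Walk w w), c₁.IsCycle → c₂.IsCycle →
      {e : Sym2 V | e ∈ c₁.edges} ≠ {e : Sym2 V | e ∈ c₂.edges} →
      ∀ x : V, x ∈ c₁.support → x ∈ c₂.support → x = u) := by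
  classical
  obtain ⟨hconn, hdeg, hnoeven, -⟩ := hG
  have hdeg2 : ∀ v : V, v ≠ u → G.degree v = 2 := by
    intro v hv
    have h1 : ¬ 2 < G.degree v := fun h => hv (huniq v h)
    have h2 := hdeg v
    omega
  have part2 : ∀ ⦃v : V⦄ (c : G.Walk v v), c.IsCycle → u ∈ c.support ∧ Odd c.length := by
    intro v c hc
    exact ⟨aux_mem_u hconn hdeg2 c hc, Nat.not_even_iff_odd.mp (hnoeven c hc)⟩
  refine ⟨?_, part2, ?_⟩
  · intro e he
    induction e using Sym2.ind with
    | _ x y =>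
      rw [SimpleGraph.mem_edgeSet] at he
      have hnb : ¬ G.IsBridge s(x, y) := by
        intro hb
        rw [SimpleGraph.isBridge_iff] at hb
        obtain ⟨hadj, hnr⟩ : G.Adj x y ∧ _ := ⟨he, hb⟩
        by_cases hxu : (G \ fromEdgeSet {s(x, y)}).Reachable x u
        · have hyu : ¬ (G \ fromEdgeSet {s(x, y)}).Reachable y u :=
            fun h => hnr (hxu.trans h.symm)
          have hnr' : ¬ (G \ fromEdgeSet {s(y, x)}).Reachable y x := by
            rw [Sym2.eq_swap]
            exact fun h => hnr h.symm
          have hyu' : ¬ (G \ fromEdgeSet {s(y, x)}).Reachable y u := by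
            rw [Sym2.eq_swap]
            exact hyu
          exact aux_parity hadj.symm hdeg2 hnr' hyu'
        · exact aux_parity hadj hdeg2 hnr hxu
      rw [SimpleGraph.isBridge_iff_adj_and_forall_cycle_notMem he] at hnb
      push_neg at hnb
      obtain ⟨w, c, hc, hec⟩ := hnb
      have huc : u ∈ c.support := (part2 c hc).1
      exact ⟨c.rotate u huc, hc.rotate huc, (c.rotate_edges u huc).mem_iff.mpr hec⟩
  · intro v w c₁ c₂ hc1 hc2 hne x hx1 hx2
    by_contra hxu
    apply hne
    ext e
    exact ⟨fun h => aux_edge_sub hconn hdeg2 c₁ c₂ hc1 hc2 hx1 hx2 hxu e h,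
      fun h => aux_edge_sub hconn hdeg2 c₂ c₁ hc2 hc1 hx2 hx1 hxu e h⟩
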